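/- In a mixed tête-à-tête graph, every mixed safe walk has order equal to c_p: if (Γ^•, A^•, δ_•) satisfies the relative mixed tête-à-tête property, then for every point p in Γ minus the vertices, the mixed safe walks γ_p and ω_p starting at p both have order c_p, where c_p is the largest index i with p ∈ Γ^i. -/
import Mathlib


/-!
Mixed tête-à-tête graphs.  A filtered relative metric ribbon graph is a
decreasing filtration `(Γ,A) = (Γ⁰,A⁰) ⊃ (Γ¹,A¹) ⊃ ⋯ ⊃ (Γ^d,A^d)` of relative
metric ribbon graphs with locally constant length functions `δ_i : Γ^i → ℝ≥0`,
`δ₀ > 0`.  We model it abstractly: `F i` is the `i`-th level of the filtration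
(a subspace of the metric space `Γ`), `A i` its relative part, `walk i p dir`
is the safe walk in `Γ^i` from `p` in direction `dir`, and the mixed safe walk
from `(p, dir)` is encoded by the sequence `seg p dir j` of starting points of
its constituent safe walks (with running directions `segDir p dir j`), as in
its recursive definition:
`seg p dir (j+1)` is the endpoint of a safe walk in `Γ^j` of length
`δ_j(seg p dir j)` starting at `seg p dir j`. -/
structure MixedTatGraph (Γ : Type*) [MetricSpace Γ] where
  V : Finset Γ
  /-- depth of the filtration -/
  d : ℕ
  /-- the filtration `Γ^i` -/
  F : ℕ → Set Γ
  /-- the relative parts `A^i` -/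
  A : ℕ → Set Γ
  F_zero : F 0 = Set.univ
  F_antitone : ∀ i j, i ≤ j → F j ⊆ F i
  A_antitone : ∀ i j, i ≤ j → A j ⊆ A i
  A_sub : ∀ i, A i ⊆ F i
  /-- the (locally constant) length functions `δ_i` -/
  δ : ℕ → Γ → ℝ
  δ_nonneg : ∀ i p, 0 ≤ δ i p
  δ_zero_pos : ∀ p, 0 < δ 0 p
  δ_locConst : ∀ i p q, p ∈ F i → q ∈ F i →
    connectedComponentIn (F i) p = connectedComponentIn (F i) q → δ i p = δ i q
  /-- the safe walk in `Γ^i` from `p` in direction `dir` -/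
  walk : ℕ → Γ → Bool → ℝ → Γ
  walk_zero : ∀ i p dir, walk i p dir 0 = p
  walk_mem : ∀ i p dir t, p ∈ F i → 0 ≤ t → walk i p dir t ∈ F i
  walk_cont : ∀ i p dir, Continuous (walk i p dir)
  walk_unit_speed : ∀ i p dir t, 0 ≤ t → ∃ ε > 0, ∀ s, 0 ≤ s → |s - t| < ε →
    dist (walk i p dir s) (walk i p dir t) = |s - t|
  /-- starting points of the constituent safe walks of the mixed safe walk -/
  seg : Γ → Bool → ℕ → Γ
  /-- running directions of the constituent safe walks -/
  segDir : Γ → Bool → ℕ → Bool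
  seg_zero : ∀ p dir, seg p dir 0 = p
  segDir_zero : ∀ p dir, segDir p dir 0 = dir
  seg_succ : ∀ p dir j,
    seg p dir (j + 1) = walk j (seg p dir j) (segDir p dir j) (δ j (seg p dir j))

variable {Γ : Type*} [MetricSpace Γ]

/-- `c_p`: the largest `i ≤ d` with `p ∈ Γ^i`. -/
noncomputable def MixedTatGraph.level (G : MixedTatGraph Γ) (p : Γ) : ℕ :=
  sSup {i | i ≤ G.d ∧ p ∈ G.F i}

/-- The order of the mixed safe walk from `(p, dir)`: the index of its last
constituent safe walk, i.e. the least `i` such that the algorithm stops after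
constructing `γ_p^i` (because `i+1 > c_p` or the endpoint of `γ_p^i` is not in
`Γ^{i+1}`). -/
noncomputable def MixedTatGraph.order (G : MixedTatGraph Γ) (p : Γ)
    (dir : Bool) : ℕ :=
  sInf {i | G.level p < i + 1 ∨ G.seg p dir (i + 1) ∉ G.F (i + 1)}

/-- The endpoint of the mixed safe walk from `(p, dir)`. -/
noncomputable def MixedTatGraph.endpoint (G : MixedTatGraph Γ) (p : Γ)
    (dir : Bool) : Γ :=
  G.seg p dir (G.order p dir + 1)

/-- The relative mixed tête-à-tête property (conditions (I) and (II) for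
interior points; the boundary condition (III) concerns the boundary mixed
safe walks starting on `A⁰`). -/
def MixedTatProperty (G : MixedTatGraph Γ) : Prop :=
  ∀ p, p ∉ G.V → p ∉ G.A 0 →
    -- (I) the two mixed safe walks from p have the same endpoint
    G.endpoint p true = G.endpoint p false ∧
    -- (II) the level of the common endpoint equals the level of p
    (∀ dir, G.level (G.endpoint p dir) = G.level p)

/-!
STATEMENT 17. In a mixed tête-à-tête graph, every mixed safe walk has order
equal to `c_p`: for every point `p` of `Γ` which is not a vertex, the mixed
safe walks `γ_p` and `ω_p` both have order `c_p`. -/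
theorem mixed_safe_walk_order_eq_level (G : MixedTatGraph Γ)
    (htat : MixedTatProperty G) :
    ∀ p, p ∉ G.V → p ∉ G.A 0 → ∀ dir,
      G.order p dir = G.level p := by
  -- key lemma: every point lies in `F` of its level
  have mem_level : ∀ q : Γ, q ∈ G.F (G.level q) := by
    intro q
    have h0 : 0 ∈ {i | i ≤ G.d ∧ q ∈ G.F i} := ⟨Nat.zero_le _, by simp [G.F_zero]⟩
    have hbdd : BddAbove {i | i ≤ G.d ∧ q ∈ G.F i} := ⟨G.d, fun i hi => hi.1⟩
    exact (Nat.sSup_mem ⟨0, h0⟩ hbdd).2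
  intro p hpV hpA dir
  set c := G.level p with hc
  have hcS : c ∈ {i | G.level p < i + 1 ∨ G.seg p dir (i + 1) ∉ G.F (i + 1)} :=
    Or.inl (Nat.lt_succ_self c)
  have hle : G.order p dir ≤ c := Nat.sInf_le hcS
  rcases lt_or_eq_of_le hle with hlt | heq
  · exfalso
    have hmem := Nat.sInf_mem (⟨c, hcS⟩ :
      Set.Nonempty {i | G.level p < i + 1 ∨ G.seg p dir (i + 1) ∉ G.F (i + 1)})
    have hnot : ¬ (G.level p < G.order p dir + 1) := by omega
    have hseg : G.seg p dir (G.order p dir + 1) ∉ G.F (G.order p dir + 1) := by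
      rcases hmem with h | h
      · exact absurd h hnot
      · exact h
    have hII := (htat p hpV hpA).2 dir
    have hend : G.endpoint p dir ∈ G.F c := by
      have := mem_level (G.endpoint p dir)
      rwa [hII] at this
    have : G.endpoint p dir ∈ G.F (G.order p dir + 1) :=
      G.F_antitone _ _ (by omega) hend
    exact hseg this
  · exact heq
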